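/- If a₁ > a₂ > 0 and the configuration η ⊆ ℤ^d is a union of hypercubes, then the iterates of the best-response map form a nondecreasing sequence of configurations: Φⁿ(η) ⊆ Φ^{n+1}(η) for every integer n ≥ 0. -/
import Mathlib

/-- Two sites of `ℤᵈ` are neighbors iff their `ℓ¹`-distance equals `1`. -/
def Neighbor (d : ℕ) (x y : Fin d → ℤ) : Prop :=
  (∑ i, (x i - y i).natAbs) = 1

/-- Number of neighbors of `x` following strategy 1 (i.e. belonging to `η`). -/
noncomputable def N1 (d : ℕ) (η : Set (Fin d → ℤ)) (x : Fin d → ℤ) : ℕ :=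
  Set.ncard {y | Neighbor d x y ∧ y ∈ η}

/-- Number of neighbors of `x` following strategy 2 (i.e. not belonging to `η`). -/
noncomputable def N2 (d : ℕ) (η : Set (Fin d → ℤ)) (x : Fin d → ℤ) : ℕ :=
  Set.ncard {y | Neighbor d x y ∧ y ∉ η}

/-- The best-response map on configurations. -/
def Phi (d : ℕ) (a₁ a₂ : ℝ) (η : Set (Fin d → ℤ)) : Set (Fin d → ℤ) :=
  {x | a₁ * (N1 d η x : ℝ) > a₂ * (N2 d η x : ℝ) ∨
    (x ∈ η ∧ a₁ * (N1 d η x : ℝ) = a₂ * (N2 d η x : ℝ))}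

/-- The hypercube `H_z = 2z + {0,1}^d`. -/
def Hcube (d : ℕ) (z : Fin d → ℤ) : Set (Fin d → ℤ) :=
  {x | ∀ i, x i = 2 * z i ∨ x i = 2 * z i + 1}

/-- A configuration is a union of hypercubes if it is `⋃_{z ∈ S} H_z` for some `S ⊆ ℤᵈ`. -/
def IsUnionOfHypercubes (d : ℕ) (η : Set (Fin d → ℤ)) : Prop :=
  ∃ S : Set (Fin d → ℤ), η = ⋃ z ∈ S, Hcube d z

lemma neighbor_char {d : ℕ} {x y : Fin d → ℤ} (h : Neighbor d x y) :
    ∃ i, y = Function.update x i (x i + 1) ∨ y = Function.update x i (x i - 1) := by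
  unfold Neighbor at h
  have hex : ∃ i, (x i - y i).natAbs ≠ 0 := by
    by_contra hc
    push_neg at hc
    rw [Finset.sum_eq_zero (fun j _ => hc j)] at h
    exact absurd h (by norm_num)
  obtain ⟨i, hi⟩ := hex
  have hsplit : (x i - y i).natAbs + ∑ j ∈ Finset.univ.erase i, (x j - y j).natAbs = 1 := by
    rw [Finset.add_sum_erase Finset.univ (fun j => (x j - y j).natAbs) (Finset.mem_univ i)]
    exact h
  have h1 : (x i - y i).natAbs = 1 ∧ ∑ j ∈ Finset.univ.erase i, (x j - y j).natAbs = 0 := by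
    omega
  have hothers : ∀ j, j ≠ i → x j = y j := by
    intro j hj
    have := (Finset.sum_eq_zero_iff).mp h1.2 j (Finset.mem_erase.mpr ⟨hj, Finset.mem_univ j⟩)
    omega
  have hcase : x i - y i = 1 ∨ x i - y i = -1 := Int.natAbs_eq_iff.mp h1.1
  refine ⟨i, ?_⟩
  rcases hcase with hc | hc
  · right
    funext j
    rcases eq_or_ne j i with rfl | hji
    · simp; omega
    · simp [Function.update_of_ne hji, (hothers j hji).symm]
  · left
    funext j
    rcases eq_or_ne j i with rfl | hji
    · simp; omega
    · simp [Function.update_of_ne hji, (hothers j hji).symm]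

lemma neighbor_update {d : ℕ} (x : Fin d → ℤ) (i : Fin d) (c : ℤ)
    (hc : (x i - c).natAbs = 1) : Neighbor d x (Function.update x i c) := by
  unfold Neighbor
  rw [Finset.sum_eq_single i]
  · simpa using hc
  · intro j _ hj
    simp [Function.update_of_ne hj]
  · simp

lemma neighbor_finite {d : ℕ} (x : Fin d → ℤ) : {y | Neighbor d x y}.Finite := by
  apply Set.Finite.subset (Set.finite_range (fun p : Fin d × Bool =>
    Function.update x p.1 (if p.2 then x p.1 + 1 else x p.1 - 1)))
  intro y hy
  obtain ⟨i, hi | hi⟩ := neighbor_char hy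
  · exact ⟨(i, true), hi.symm⟩
  · exact ⟨(i, false), hi.symm⟩

lemma N1set_finite {d : ℕ} (η : Set (Fin d → ℤ)) (x : Fin d → ℤ) :
    {y | Neighbor d x y ∧ y ∈ η}.Finite :=
  (neighbor_finite x).subset (fun _ h => h.1)

lemma N2set_finite {d : ℕ} (η : Set (Fin d → ℤ)) (x : Fin d → ℤ) :
    {y | Neighbor d x y ∧ y ∉ η}.Finite :=
  (neighbor_finite x).subset (fun _ h => h.1)

lemma Phi_mono {d : ℕ} {a₁ a₂ : ℝ} (ha₁ : 0 < a₁) (ha₂ : 0 < a₂)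
    {η η' : Set (Fin d → ℤ)} (h : η ⊆ η') : Phi d a₁ a₂ η ⊆ Phi d a₁ a₂ η' := by
  intro x hx
  have hN1 : N1 d η x ≤ N1 d η' x :=
    Set.ncard_le_ncard (fun y hy => ⟨hy.1, h hy.2⟩) (N1set_finite η' x)
  have hN2 : N2 d η' x ≤ N2 d η x :=
    Set.ncard_le_ncard (fun y hy => ⟨hy.1, fun hc => hy.2 (h hc)⟩) (N2set_finite η x)
  have hN1' : (N1 d η x : ℝ) ≤ N1 d η' x := by exact_mod_cast hN1
  have hN2' : (N2 d η' x : ℝ) ≤ N2 d η x := by exact_mod_cast hN2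
  have key : a₂ * (N2 d η' x : ℝ) ≤ a₁ * (N1 d η' x : ℝ) := by
    rcases hx with hx | ⟨_, hx⟩ <;> nlinarith
  rcases key.lt_or_eq with hk | hk
  · exact Or.inl hk
  · rcases hx with hx | ⟨hxη, hx⟩
    · exact Or.inl (by nlinarith)
    · exact Or.inr ⟨h hxη, hk.symm⟩

lemma mem_Phi_of_hcube {d : ℕ} (hd : 1 ≤ d) {a₁ a₂ : ℝ} (ha : a₁ > a₂) (ha₂ : 0 < a₂)
    {η : Set (Fin d → ℤ)} {z x : Fin d → ℤ} (hx : x ∈ Hcube d z) (hsub : Hcube d z ⊆ η) :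
    x ∈ Phi d a₁ a₂ η := by
  set f : Fin d → (Fin d → ℤ) := fun i =>
    Function.update x i (if x i = 2 * z i then x i + 1 else x i - 1) with hf
  set g : Fin d → (Fin d → ℤ) := fun i =>
    Function.update x i (if x i = 2 * z i then x i - 1 else x i + 1) with hg
  have hfmem : ∀ i, f i ∈ {y | Neighbor d x y ∧ y ∈ η} := by
    intro i
    constructor
    · apply neighbor_update
      split <;> omega
    · apply hsub
      intro j
      rcases eq_or_ne j i with rfl | hji
      · simp only [hf, Function.update_self]
        rcases hx j with h' | h' <;> simp [h']
      · simpa only [hf, Function.update_of_ne hji] using hx j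
  have hfinj : Function.Injective f := by
    intro i j hij
    by_contra hne
    have h1 : f i i ≠ x i := by
      simp only [hf, Function.update_self]
      split <;> omega
    have h2 : f j i = x i := by
      simp only [hf, Function.update_of_ne hne]
    exact h1 (by rw [hij, h2])
  have hN1 : d ≤ N1 d η x := by
    have hr : Set.range f ⊆ {y | Neighbor d x y ∧ y ∈ η} := by
      rintro y ⟨i, rfl⟩; exact hfmem i
    have := Set.ncard_le_ncard hr (N1set_finite η x)
    rwa [← Set.image_univ, Set.ncard_image_of_injective _ hfinj, Set.ncard_univ,
      Nat.card_eq_fintype_card, Fintype.card_fin] at this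
  have hN2 : N2 d η x ≤ d := by
    have hr : {y | Neighbor d x y ∧ y ∉ η} ⊆ Set.range g := by
      rintro y ⟨hy, hyn⟩
      obtain ⟨i, hi | hi⟩ := neighbor_char hy
      · rcases hx i with h' | h'
        · exfalso
          apply hyn; apply hsub
          intro j
          rcases eq_or_ne j i with rfl | hji
          · rw [hi]; simp [h']
          · rw [hi, Function.update_of_ne hji]; exact hx j
        · exact ⟨i, by rw [hi, hg]; simp [h']⟩
      · rcases hx i with h' | h'
        · exact ⟨i, by rw [hi, hg]; simp [h']⟩
        · exfalso
          apply hyn; apply hsub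
          intro j
          rcases eq_or_ne j i with rfl | hji
          · rw [hi]; simp; omega
          · rw [hi, Function.update_of_ne hji]; exact hx j
    calc N2 d η x ≤ (Set.range g).ncard :=
          Set.ncard_le_ncard hr (Set.finite_range g)
      _ ≤ d := by
          rw [← Set.image_univ]
          calc (g '' Set.univ).ncard ≤ (Set.univ : Set (Fin d)).ncard :=
                Set.ncard_image_le Set.finite_univ
            _ = d := by rw [Set.ncard_univ, Nat.card_eq_fintype_card, Fintype.card_fin]
  left
  have h1 : (d : ℝ) ≤ N1 d η x := by exact_mod_cast hN1
  have h2 : (N2 d η x : ℝ) ≤ d := by exact_mod_cast hN2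
  have hd' : (1 : ℝ) ≤ d := by exact_mod_cast hd
  nlinarith

/-- If `a₁ > a₂ > 0` and `η` is a union of hypercubes, then the iterates of the
best-response map form a nondecreasing sequence of configurations. -/
theorem Phi_iterates_nondecreasing (d : ℕ) (hd : 1 ≤ d) (a₁ a₂ : ℝ)
    (ha : a₁ > a₂) (ha₂ : 0 < a₂)
    (η : Set (Fin d → ℤ)) (hη : IsUnionOfHypercubes d η) :
    ∀ n : ℕ, (Phi d a₁ a₂)^[n] η ⊆ (Phi d a₁ a₂)^[n + 1] η := by
  have ha₁ : 0 < a₁ := lt_trans ha₂ ha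
  have hbase : η ⊆ Phi d a₁ a₂ η := by
    obtain ⟨S, rfl⟩ := hη
    intro x hx
    obtain ⟨z, hz, hxz⟩ := Set.mem_iUnion₂.mp hx
    exact mem_Phi_of_hcube hd ha ha₂ hxz (Set.subset_biUnion_of_mem hz)
  intro n
  induction n with
  | zero => simpa using hbase
  | succ n ih =>
      rw [Function.iterate_succ_apply', Function.iterate_succ_apply']
      exact Phi_mono ha₁ ha₂ ih
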